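/- Let X = Δ × ℂ with exhaustion function τ(z, w) = |w| + (1 − |z|)^{-1}. Let D ⊂ X be a discrete subset containing a sequence (p_n, q_n) with |q_n| → ∞ and p_n → p ∈ Δ. Then D is not tame: there exists ζ: D → ℝ≥0 such that no automorphism of X of the form (z, w) ↦ (φ(z), f(z)w + g(z)) (φ ∈ Aut(Δ), f ∈ O*(Δ), g ∈ O(Δ)) satisfies τ(Φ(x)) ≥ ζ(x) for all x ∈ D. -/

import Mathlib

open Set Metric Filter

/-- a discrete subset of Δ × ℂ containing a sequence (p_n, q_n) with
|q_n| → ∞ and p_n → p ∈ Δ is not tame: some ζ defeats every automorphism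
(z,w) ↦ (φ(z), f(z)w + g(z)) for the exhaustion function τ(z,w) = |w| + (1−|z|)⁻¹. -/
theorem stmt10 (D : Set (ℂ × ℂ))
    (hDsub : D ⊆ ball (0 : ℂ) 1 ×ˢ (univ : Set ℂ))
    (hDdisc : ∀ p ∈ ball (0 : ℂ) 1 ×ˢ (univ : Set ℂ), ¬ AccPt p (Filter.principal D))
    (p : ℕ → ℂ) (q : ℕ → ℂ) (hpq : ∀ n, (p n, q n) ∈ D)
    (hq : Tendsto (fun n => ‖q n‖) atTop atTop)
    (p₀ : ℂ) (hp₀ : ‖p₀‖ < 1) (hp : Tendsto p atTop (nhds p₀)) :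
    ∃ ζ : ℂ × ℂ → ℝ, (∀ x, 0 ≤ ζ x) ∧
      ∀ φ f g : ℂ → ℂ,
        DifferentiableOn ℂ φ (ball (0 : ℂ) 1) →
        BijOn φ (ball (0 : ℂ) 1) (ball (0 : ℂ) 1) →
        DifferentiableOn ℂ f (ball (0 : ℂ) 1) → (∀ z ∈ ball (0 : ℂ) 1, f z ≠ 0) →
        DifferentiableOn ℂ g (ball (0 : ℂ) 1) →
        ∃ x ∈ D,
          ‖f x.1 * x.2 + g x.1‖ + (1 - ‖φ x.1‖)⁻¹ < ζ x := by
  refine ⟨fun x => ‖x.2‖ ^ 2, fun x => by positivity, ?_⟩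
  intro φ f g hφ hφbij hf hf0 hg
  have hp₀mem : p₀ ∈ ball (0 : ℂ) 1 := mem_ball_zero_iff.mpr (by simpa using hp₀)
  have hnb : ball (0 : ℂ) 1 ∈ nhds p₀ := isOpen_ball.mem_nhds hp₀mem
  have hφc : ContinuousAt φ p₀ := hφ.continuousOn.continuousAt hnb
  have hfc : ContinuousAt f p₀ := hf.continuousOn.continuousAt hnb
  have hgc : ContinuousAt g p₀ := hg.continuousOn.continuousAt hnb
  have hφp : Tendsto (fun n => ‖φ (p n)‖) atTop (nhds (‖φ p₀‖)) :=
    (continuous_norm.tendsto _).comp (hφc.tendsto.comp hp)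
  have hfp : Tendsto (fun n => ‖f (p n)‖) atTop (nhds (‖f p₀‖)) :=
    (continuous_norm.tendsto _).comp (hfc.tendsto.comp hp)
  have hgp : Tendsto (fun n => ‖g (p n)‖) atTop (nhds (‖g p₀‖)) :=
    (continuous_norm.tendsto _).comp (hgc.tendsto.comp hp)
  have hφ0 : ‖φ p₀‖ < 1 := by
    have := hφbij.mapsTo hp₀mem
    simpa [mem_ball_zero_iff] using this
  have hpos : (0 : ℝ) < 1 - ‖φ p₀‖ := by linarith
  have hinv : Tendsto (fun n => (1 - ‖φ (p n)‖)⁻¹) atTop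
      (nhds ((1 - ‖φ p₀‖)⁻¹)) :=
    (tendsto_const_nhds.sub hφp).inv₀ (ne_of_gt hpos)
  set F := ‖f p₀‖ with hF
  set G := ‖g p₀‖ with hG
  set I := (1 - ‖φ p₀‖)⁻¹ with hI
  have hFn : 0 ≤ F := norm_nonneg _
  have hGn : 0 ≤ G := norm_nonneg _
  have hIn : 0 ≤ I := le_of_lt (inv_pos.mpr hpos)
  have e1 : ∀ᶠ n in atTop, ‖f (p n)‖ < F + 1 :=
    hfp.eventually_lt_const (by linarith)
  have e2 : ∀ᶠ n in atTop, ‖g (p n)‖ < G + 1 :=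
    hgp.eventually_lt_const (by linarith)
  have e3 : ∀ᶠ n in atTop, (1 - ‖φ (p n)‖)⁻¹ < I + 1 :=
    hinv.eventually_lt_const (by linarith)
  have e4 : ∀ᶠ n in atTop, F + G + I + 4 ≤ ‖q n‖ :=
    hq.eventually_ge_atTop _
  obtain ⟨n, h1, h2, h3, h4⟩ := (e1.and (e2.and (e3.and e4))).exists
  refine ⟨(p n, q n), hpq n, ?_⟩
  have htri : ‖f (p n) * q n + g (p n)‖ ≤
      ‖f (p n)‖ * ‖q n‖ + ‖g (p n)‖ := by
    calc ‖f (p n) * q n + g (p n)‖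
        ≤ ‖f (p n) * q n‖ + ‖g (p n)‖ := norm_add_le _ _
      _ = ‖f (p n)‖ * ‖q n‖ + ‖g (p n)‖ := by
          rw [norm_mul]
  have hqn : 0 ≤ ‖q n‖ := norm_nonneg _
  simp only
  nlinarith [sq_nonneg (‖q n‖)]
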